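/- Assume the narrow class group of K is finite. For ω ∈ Ô the following are equivalent: (a) ω is a boundary element, i.e. there is no totally positive x ∈ K with |N_{K/ℚ}(x)| > 1 such that v(ω_v) ≥ v(x) for every finite place v; (b) there exists a nonzero integral ideal 𝔞 of 𝒪 of minimal norm in its narrow class such that v(ω_v) = v(𝔞) for every finite place v. In particular, every boundary element ω has all components ω_v nonzero, with v(ω_v) = 0 for all but finitely many v. -/

import Mathlib

open NumberField FractionalIdeal
open scoped nonZeroDivisors

/-- An element of a number field is *totally positive* if it is positive in every
real embedding. -/
def TotallyPositive (K : Type*) [Field K] (x : K) : Prop :=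
  ∀ φ : K →+* ℝ, 0 < φ x

/-- Two fractional ideals of a number field are *narrowly equivalent* if they differ by
multiplication by a principal fractional ideal with a totally positive generator. -/
def NarrowEquiv (K : Type*) [Field K] [NumberField K]
    (I J : FractionalIdeal (𝓞 K)⁰ K) : Prop :=
  ∃ x : K, x ≠ 0 ∧ TotallyPositive K x ∧ I = spanSingleton (𝓞 K)⁰ x * J

/-- Narrow equivalence of integral ideals. -/
def NarrowEquivI (K : Type*) [Field K] [NumberField K] (I J : Ideal (𝓞 K)) : Prop :=
  NarrowEquiv K (I : FractionalIdeal (𝓞 K)⁰ K) (J : FractionalIdeal (𝓞 K)⁰ K)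

/-- A nonzero integral ideal has *minimal norm in its narrow class* if its absolute norm is
smallest among all nonzero integral ideals narrowly equivalent to it. -/
def MinNorm (K : Type*) [Field K] [NumberField K] (I : Ideal (𝓞 K)) : Prop :=
  ∀ J : Ideal (𝓞 K), J ≠ 0 → NarrowEquivI K J I → Ideal.absNorm I ≤ Ideal.absNorm J

/-- Finiteness of the narrow class group of `K`: there are only finitely many narrow
equivalence classes of nonzero fractional ideals. -/
def NarrowClassFinite (K : Type*) [Field K] [NumberField K] : Prop :=
  ∃ F : Finset (FractionalIdeal (𝓞 K)⁰ K),
    ∀ I : FractionalIdeal (𝓞 K)⁰ K, I ≠ 0 → ∃ J ∈ F, NarrowEquiv K I J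

open IsDedekindDomain
open scoped Classical

/-- The multiplicative `v`-adic value of a nonzero integral ideal `I`:
`ofAdd(-(multiplicity of v in the factorization of I))`, and `0` for `I = 0`. -/
noncomputable def idealFactorVal (K : Type*) [Field K] [NumberField K]
    (v : HeightOneSpectrum (𝓞 K)) (I : Ideal (𝓞 K)) : WithZero (Multiplicative ℤ) :=
  if I = 0 then 0
  else ↑(Multiplicative.ofAdd
    (-((Associates.mk v.asIdeal).count (Associates.mk I).factors : ℤ)))

/-- An integral finite adele `ω ∈ Ô = ∏_v 𝒪_v` is a *boundary element* if there is no totally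
positive `x ∈ K` with `|N_{K/ℚ}(x)| > 1` such that `v(ω_v) ≥ v(x)` for every finite place `v`
(equivalently, in multiplicative notation, the value of `ω_v` is at most the value of `x`). -/
def IsBoundaryElt (K : Type*) [Field K] [NumberField K]
    (ω : ∀ v : HeightOneSpectrum (𝓞 K), v.adicCompletionIntegers K) : Prop :=
  ¬ ∃ x : K, x ≠ 0 ∧ TotallyPositive K x ∧ 1 < |Algebra.norm ℚ x| ∧
    ∀ v : HeightOneSpectrum (𝓞 K),
      Valued.v ((ω v : v.adicCompletion K)) ≤ v.valuation K x


section Helpers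

set_option linter.unusedSectionVars false

variable {K : Type*} [Field K] [NumberField K]

lemma TotallyPositive.inv' {x : K} (h : TotallyPositive K x) : TotallyPositive K x⁻¹ :=
  fun φ => by rw [map_inv₀]; exact inv_pos.mpr (h φ)

lemma TotallyPositive.mul' {x y : K} (hx : TotallyPositive K x) (hy : TotallyPositive K y) :
    TotallyPositive K (x * y) :=
  fun φ => by rw [_root_.map_mul]; exact mul_pos (hx φ) (hy φ)

lemma TotallyPositive.one' : TotallyPositive K (1 : K) :=
  fun φ => by rw [_root_.map_one]; exact one_pos

lemma NarrowEquiv.refl' (I : FractionalIdeal (𝓞 K)⁰ K) : NarrowEquiv K I I :=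
  ⟨1, one_ne_zero, TotallyPositive.one', by rw [spanSingleton_one, one_mul]⟩

lemma NarrowEquiv.symm' {I J : FractionalIdeal (𝓞 K)⁰ K} (h : NarrowEquiv K I J) :
    NarrowEquiv K J I := by
  obtain ⟨x, hx0, hxP, hx⟩ := h
  refine ⟨x⁻¹, inv_ne_zero hx0, hxP.inv', ?_⟩
  rw [hx, ← mul_assoc, spanSingleton_mul_spanSingleton, inv_mul_cancel₀ hx0,
    spanSingleton_one, one_mul]

lemma NarrowEquiv.trans' {I J L : FractionalIdeal (𝓞 K)⁰ K} (h1 : NarrowEquiv K I J)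
    (h2 : NarrowEquiv K J L) : NarrowEquiv K I L := by
  obtain ⟨x, hx0, hxP, hx⟩ := h1
  obtain ⟨y, hy0, hyP, hy⟩ := h2
  exact ⟨x * y, mul_ne_zero hx0 hy0, hxP.mul' hyP, by
    rw [hx, hy, ← mul_assoc, spanSingleton_mul_spanSingleton]⟩

open IsDedekindDomain.HeightOneSpectrum in
lemma valuation_eq_count (v : HeightOneSpectrum (𝓞 K)) {x : K} (hx : x ≠ 0) :
    v.valuation K x = ↑(Multiplicative.ofAdd
      (-(FractionalIdeal.count K v (spanSingleton (𝓞 K)⁰ x)))) := by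
  obtain ⟨⟨r, s⟩, rfl⟩ := IsLocalization.mk'_surjective (𝓞 K)⁰ x
  have hr : r ≠ 0 := by rintro rfl; simp at hx
  have hrepr : spanSingleton (𝓞 K)⁰ (IsLocalization.mk' K r s) =
      spanSingleton (𝓞 K)⁰ ((algebraMap (𝓞 K) K) (s : 𝓞 K))⁻¹ * ↑(Ideal.span {r}) := by
    rw [coeIdeal_span_singleton, spanSingleton_mul_spanSingleton,
      IsFractionRing.mk'_eq_div, div_eq_inv_mul]
  rw [count_well_defined K v (by simpa [spanSingleton_eq_zero_iff,
      IsLocalization.mk'_eq_zero_iff] using hx) hrepr]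
  rw [v.valuation_of_mk', intValuation_apply, intValuation_apply,
    intValuationDef_if_neg _ hr, intValuationDef_if_neg _ (nonZeroDivisors.coe_ne_zero s)]
  rw [← WithZero.exp_sub, WithZero.exp, WithZero.coe_inj]
  congr 1
  ring

lemma exists_ideal_of_count_nonneg {I : FractionalIdeal (𝓞 K)⁰ K} (hI : I ≠ 0)
    (hc : ∀ v : HeightOneSpectrum (𝓞 K), 0 ≤ FractionalIdeal.count K v I) :
    ∃ J : Ideal (𝓞 K), J ≠ 0 ∧ (J : FractionalIdeal (𝓞 K)⁰ K) = I := by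
  have hfin : {v : HeightOneSpectrum (𝓞 K) | FractionalIdeal.count K v I ≠ 0}.Finite := by
    simpa [Filter.eventually_cofinite] using FractionalIdeal.finite_factors I
  set S := hfin.toFinset with hS
  refine ⟨∏ v ∈ S, v.asIdeal ^ (FractionalIdeal.count K v I).toNat, ?_, ?_⟩
  · exact Finset.prod_ne_zero_iff.mpr fun v _ => pow_ne_zero _ v.ne_bot
  · conv_rhs => rw [← FractionalIdeal.finprod_heightOneSpectrum_factorization' (K := K) hI]
    rw [show ((∏ v ∈ S, v.asIdeal ^ (FractionalIdeal.count K v I).toNat : Ideal (𝓞 K)) :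
        FractionalIdeal (𝓞 K)⁰ K) = ∏ v ∈ S,
          ((v.asIdeal ^ (FractionalIdeal.count K v I).toNat : Ideal (𝓞 K)) :
            FractionalIdeal (𝓞 K)⁰ K) from
      map_prod (coeIdealHom (𝓞 K)⁰ K) _ S]
    rw [finprod_eq_prod_of_mulSupport_subset _ (s := S)
      (by
        intro v hv
        rw [Function.mem_mulSupport] at hv
        rw [hS, Set.Finite.coe_toFinset, Set.mem_setOf_eq]
        intro h0
        exact hv (by rw [h0, zpow_zero]))]
    refine Finset.prod_congr rfl fun v _ => ?_
    rw [coeIdeal_pow, ← zpow_natCast, Int.toNat_of_nonneg (hc v)]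

/-- Norms multiply along a narrow-equivalence relation between integral ideals. -/
lemma absNorm_eq_of_span_mul {x : K} {J A : Ideal (𝓞 K)}
    (hJ : (J : FractionalIdeal (𝓞 K)⁰ K) = spanSingleton (𝓞 K)⁰ x * (A : FractionalIdeal (𝓞 K)⁰ K)) :
    (Ideal.absNorm J : ℚ) = |Algebra.norm ℚ x| * (Ideal.absNorm A : ℚ) := by
  have := congrArg FractionalIdeal.absNorm hJ
  rwa [coeIdeal_absNorm, _root_.map_mul, coeIdeal_absNorm,
    FractionalIdeal.absNorm_span_singleton] at this

lemma norm_abs_inv {x : K} (hx : x ≠ 0) :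
    |Algebra.norm ℚ x⁻¹| = |Algebra.norm ℚ x|⁻¹ := by
  have h := _root_.map_mul (Algebra.norm ℚ) x⁻¹ x
  rw [inv_mul_cancel₀ hx, _root_.map_one] at h
  have hnx : Algebra.norm ℚ x ≠ 0 := by
    intro h0; rw [h0, mul_zero] at h; exact one_ne_zero h
  have : Algebra.norm ℚ x⁻¹ = (Algebra.norm ℚ x)⁻¹ :=
    eq_inv_of_mul_eq_one_left h.symm
  rw [this, abs_inv]

/-- Produce a contradiction to boundariness from a nonzero, non-unit ideal with a
totally positive generator whose valuations dominate those of `ω`. -/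
lemma not_boundary_of_narrowly_principal
    (ω : ∀ v : HeightOneSpectrum (𝓞 K), v.adicCompletionIntegers K)
    {y : K} (hy0 : y ≠ 0) (hyP : TotallyPositive K y) {C : Ideal (𝓞 K)}
    (hC0 : C ≠ 0) (hCtop : C ≠ ⊤)
    (hspan : spanSingleton (𝓞 K)⁰ y = (C : FractionalIdeal (𝓞 K)⁰ K))
    (hval : ∀ v : HeightOneSpectrum (𝓞 K),
      Valued.v ((ω v : v.adicCompletion K)) ≤ v.valuation K y) :
    ¬ IsBoundaryElt K ω := by
  intro hb
  refine hb ⟨y, hy0, hyP, ?_, hval⟩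
  have h1 : |Algebra.norm ℚ y| = (Ideal.absNorm C : ℚ) := by
    rw [← FractionalIdeal.absNorm_span_singleton (𝓞 K) y, hspan, coeIdeal_absNorm]
  rw [h1]
  have h2 : Ideal.absNorm C ≠ 0 := by
    simpa [Ideal.absNorm_eq_zero_iff] using hC0
  have h3 : Ideal.absNorm C ≠ 1 := by
    simpa [Ideal.absNorm_eq_one_iff] using hCtop
  have : 1 < Ideal.absNorm C := lt_of_le_of_ne (Nat.pos_of_ne_zero h2) (Ne.symm h3)
  exact_mod_cast this

lemma pigeonhole_narrow (hfin : NarrowClassFinite K)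
    (I : ℕ → FractionalIdeal (𝓞 K)⁰ K) (hne : ∀ n, I n ≠ 0) :
    ∃ i j : ℕ, i < j ∧ NarrowEquiv K (I i) (I j) := by
  obtain ⟨F, hF⟩ := hfin
  choose g hgF hEq using fun n => hF (I n) (hne n)
  obtain ⟨a, b, hne', hab⟩ := Finite.exists_ne_map_eq_of_infinite
    (fun n : ℕ => (⟨g n, hgF n⟩ : {J // J ∈ F}))
  simp only [Subtype.mk.injEq] at hab
  rcases hne'.lt_or_gt with h | h
  · exact ⟨a, b, h, (hEq a).trans' (hab ▸ (hEq b)).symm'⟩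
  · exact ⟨b, a, h, (hEq b).trans' (hab ▸ (hEq a)).symm'⟩

lemma le_coe_ofAdd_neg_iff {a b : ℤ} :
    ((Multiplicative.ofAdd (-a) : Multiplicative ℤ) : WithZero (Multiplicative ℤ)) ≤
      (Multiplicative.ofAdd (-b) : Multiplicative ℤ) ↔ b ≤ a := by
  rw [WithZero.coe_le_coe, Multiplicative.ofAdd_le]
  omega

lemma le_ofAdd_neg_one {x : WithZero (Multiplicative ℤ)} (h1 : x ≤ 1) (h2 : x ≠ 1) :
    x ≤ ((Multiplicative.ofAdd (-1 : ℤ) : Multiplicative ℤ) : WithZero (Multiplicative ℤ)) := by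
  rcases eq_or_ne x 0 with rfl | hx0
  · exact zero_le'
  obtain ⟨m, rfl⟩ := WithZero.ne_zero_iff_exists.mp hx0
  rw [show (1 : WithZero (Multiplicative ℤ)) =
    ((Multiplicative.ofAdd (0 : ℤ) : Multiplicative ℤ) : WithZero (Multiplicative ℤ)) by rfl]
    at h1 h2
  rw [WithZero.coe_le_coe] at h1 ⊢
  rw [ne_eq, WithZero.coe_inj] at h2
  have h1' : Multiplicative.toAdd m ≤ 0 := h1
  have h2' : Multiplicative.toAdd m ≠ 0 := fun h => h2 (by
    rw [← ofAdd_toAdd m, h])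
  show Multiplicative.toAdd m ≤ -1
  omega

lemma span_inv_eq_of_narrow {A C : Ideal (𝓞 K)} (hA : A ≠ 0) {x : K}
    (h : (A : FractionalIdeal (𝓞 K)⁰ K) =
      spanSingleton (𝓞 K)⁰ x * ((A * C : Ideal (𝓞 K)) : FractionalIdeal (𝓞 K)⁰ K)) :
    spanSingleton (𝓞 K)⁰ x⁻¹ = (C : FractionalIdeal (𝓞 K)⁰ K) := by
  rw [coeIdeal_mul] at h
  have hA' : (A : FractionalIdeal (𝓞 K)⁰ K) ≠ 0 := coeIdeal_ne_zero.mpr hA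
  have key : (A : FractionalIdeal (𝓞 K)⁰ K) * (spanSingleton (𝓞 K)⁰ x *
      (C : FractionalIdeal (𝓞 K)⁰ K)) = (A : FractionalIdeal (𝓞 K)⁰ K) * 1 := by
    rw [mul_one]
    conv_rhs => rw [h]
    ring
  have h1 : spanSingleton (𝓞 K)⁰ x * (C : FractionalIdeal (𝓞 K)⁰ K) = 1 :=
    mul_left_cancel₀ hA' key
  rw [← spanSingleton_inv]
  exact inv_eq_of_mul_eq_one_right h1

lemma boundary_components_ne_zero (hfin : NarrowClassFinite K)
    (ω : ∀ v : HeightOneSpectrum (𝓞 K), v.adicCompletionIntegers K)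
    (hb : IsBoundaryElt K ω) :
    ∀ v : HeightOneSpectrum (𝓞 K), ((ω v : v.adicCompletion K)) ≠ 0 := by
  by_contra hz
  push_neg at hz
  obtain ⟨w, hw⟩ := hz
  obtain ⟨i, j, hij, x, hx0, hxP, hx⟩ := pigeonhole_narrow hfin
    (fun j => ((w.asIdeal ^ (j + 1) : Ideal (𝓞 K)) : FractionalIdeal (𝓞 K)⁰ K))
    (fun j => coeIdeal_ne_zero.mpr (pow_ne_zero _ w.ne_bot))
  have hpow : w.asIdeal ^ (j + 1) = w.asIdeal ^ (i + 1) * w.asIdeal ^ (j - i) := by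
    rw [← pow_add]; congr 1; omega
  rw [hpow] at hx
  have hspan := span_inv_eq_of_narrow (pow_ne_zero _ w.ne_bot) hx
  have hCne : w.asIdeal ^ (j - i) ≠ 0 := pow_ne_zero _ w.ne_bot
  refine not_boundary_of_narrowly_principal ω (inv_ne_zero hx0) hxP.inv' hCne ?_ hspan ?_ hb
  · intro htop
    exact w.isPrime.ne_top (top_le_iff.mp (htop ▸ Ideal.pow_le_self (by omega)))
  · intro v
    rw [valuation_eq_count v (inv_ne_zero hx0), hspan, coeIdeal_pow,
      FractionalIdeal.count_pow, FractionalIdeal.count_maximal]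
    by_cases hvw : v = w
    · subst hvw
      rw [hw, _root_.map_zero]
      exact zero_le'
    · rw [if_neg (fun h => hvw h.symm), mul_zero, neg_zero]
      have := (HeightOneSpectrum.mem_adicCompletionIntegers (𝓞 K) K v).mp (ω v).2
      simpa using this

lemma boundary_support_finite (hfin : NarrowClassFinite K)
    (ω : ∀ v : HeightOneSpectrum (𝓞 K), v.adicCompletionIntegers K)
    (hb : IsBoundaryElt K ω) :
    {v : HeightOneSpectrum (𝓞 K) |
      Valued.v ((ω v : v.adicCompletion K)) ≠ 1}.Finite := by
  by_contra hinf
  set T := {v : HeightOneSpectrum (𝓞 K) |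
    Valued.v ((ω v : v.adicCompletion K)) ≠ 1} with hT
  let e := (Set.Infinite.natEmbedding _ (hinf : _)) 
  set f : ℕ → HeightOneSpectrum (𝓞 K) := fun n => (e n : _) with hf
  have hfinj : Function.Injective f := fun a b h => e.injective (Subtype.ext h)
  have hfT : ∀ n, f n ∈ T := fun n => (e n).2
  obtain ⟨i, j, hij, x, hx0, hxP, hx⟩ := pigeonhole_narrow hfin
    (fun j => ((∏ t ∈ Finset.range (j + 1), (f t).asIdeal : Ideal (𝓞 K)) :
      FractionalIdeal (𝓞 K)⁰ K))
    (fun j => coeIdeal_ne_zero.mpr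
      (Finset.prod_ne_zero_iff.mpr fun t _ => (f t).ne_bot))
  set C : Ideal (𝓞 K) := ∏ t ∈ Finset.Ico (i + 1) (j + 1), (f t).asIdeal with hC
  have hCne : C ≠ 0 := Finset.prod_ne_zero_iff.mpr fun t _ => (f t).ne_bot
  have hsplit : (∏ t ∈ Finset.range (j + 1), (f t).asIdeal : Ideal (𝓞 K)) =
      (∏ t ∈ Finset.range (i + 1), (f t).asIdeal) * C := by
    rw [hC, Finset.range_eq_Ico, Finset.range_eq_Ico]
    exact (Finset.prod_Ico_consecutive (fun t => (f t).asIdeal) (by omega) (by omega)).symm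
  rw [hsplit] at hx
  have hspan := span_inv_eq_of_narrow
    (Finset.prod_ne_zero_iff.mpr fun t _ => (f t).ne_bot) hx
  refine not_boundary_of_narrowly_principal ω (inv_ne_zero hx0) hxP.inv' hCne ?_ hspan ?_ hb
  · intro htop
    have hmem : i + 1 ∈ Finset.Ico (i + 1) (j + 1) := by
      simp only [Finset.mem_Ico]; omega
    have hdvd : (f (i + 1)).asIdeal ∣ C := Finset.dvd_prod_of_mem _ hmem
    have hle : C ≤ (f (i + 1)).asIdeal := Ideal.le_of_dvd hdvd
    rw [htop] at hle
    exact (f (i + 1)).isPrime.ne_top (top_le_iff.mp hle)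
  · intro v
    rw [valuation_eq_count v (inv_ne_zero hx0), hspan]
    have hcount : FractionalIdeal.count K v (C : FractionalIdeal (𝓞 K)⁰ K) =
        ∑ t ∈ Finset.Ico (i + 1) (j + 1), (if f t = v then 1 else 0 : ℤ) := by
      rw [hC, show ((∏ t ∈ Finset.Ico (i + 1) (j + 1), (f t).asIdeal : Ideal (𝓞 K)) :
          FractionalIdeal (𝓞 K)⁰ K) = ∏ t ∈ Finset.Ico (i + 1) (j + 1),
            (((f t).asIdeal : Ideal (𝓞 K)) : FractionalIdeal (𝓞 K)⁰ K) from
        map_prod (coeIdealHom (𝓞 K)⁰ K) _ _]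
      rw [FractionalIdeal.count_prod]
      · exact Finset.sum_congr rfl fun t _ => FractionalIdeal.count_maximal K v (f t)
      · exact fun t _ => coeIdeal_ne_zero.mpr (f t).ne_bot
    by_cases hex : ∃ t ∈ Finset.Ico (i + 1) (j + 1), f t = v
    · obtain ⟨t₀, ht₀, hft₀⟩ := hex
      have hsum : ∑ t ∈ Finset.Ico (i + 1) (j + 1), (if f t = v then 1 else 0 : ℤ) = 1 := by
        rw [Finset.sum_eq_single t₀]
        · rw [if_pos hft₀]
        · intro t ht hne
          rw [if_neg (fun h => hne (hfinj (h.trans hft₀.symm)))]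
        · intro h; exact absurd ht₀ h
      rw [hcount, hsum]
      have hvT : v ∈ T := hft₀ ▸ hfT t₀
      exact le_ofAdd_neg_one ((HeightOneSpectrum.mem_adicCompletionIntegers (𝓞 K) K v).mp (ω v).2) hvT
    · push_neg at hex
      have hsum : ∑ t ∈ Finset.Ico (i + 1) (j + 1), (if f t = v then 1 else 0 : ℤ) = 0 := by
        exact Finset.sum_eq_zero fun t ht => if_neg (hex t ht)
      rw [hcount, hsum, neg_zero]
      have := (HeightOneSpectrum.mem_adicCompletionIntegers (𝓞 K) K v).mp (ω v).2
      simpa using this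

lemma boundary_exists_minnorm_ideal (hfin : NarrowClassFinite K)
    (ω : ∀ v : HeightOneSpectrum (𝓞 K), v.adicCompletionIntegers K)
    (hb : IsBoundaryElt K ω) :
    ∃ 𝔞 : Ideal (𝓞 K), 𝔞 ≠ 0 ∧ MinNorm K 𝔞 ∧
      ∀ v : HeightOneSpectrum (𝓞 K),
        Valued.v ((ω v : v.adicCompletion K)) = idealFactorVal K v 𝔞 := by
  have hz := boundary_components_ne_zero hfin ω hb
  have hTfin := boundary_support_finite hfin ω hb
  have hne0 : ∀ v : HeightOneSpectrum (𝓞 K),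
      Valued.v ((ω v : v.adicCompletion K)) ≠ 0 :=
    fun v => fun h => hz v ((Valued.v).zero_iff.mp h)
  set c : HeightOneSpectrum (𝓞 K) → ℤ :=
    fun v => -Multiplicative.toAdd (WithZero.unzero (hne0 v)) with hc
  have hval : ∀ v : HeightOneSpectrum (𝓞 K),
      Valued.v ((ω v : v.adicCompletion K)) =
        ↑(Multiplicative.ofAdd (-(c v))) := by
    intro v
    rw [hc]
    simp only [neg_neg, ofAdd_toAdd, WithZero.coe_unzero]
  have hle1 : ∀ v : HeightOneSpectrum (𝓞 K),
      Valued.v ((ω v : v.adicCompletion K)) ≤ 1 :=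
    fun v => (HeightOneSpectrum.mem_adicCompletionIntegers (𝓞 K) K v).mp (ω v).2
  have hc0 : ∀ v, 0 ≤ c v := by
    intro v
    have := hle1 v
    rw [hval v, show (1 : WithZero (Multiplicative ℤ)) =
      ((Multiplicative.ofAdd (-(0:ℤ)) : Multiplicative ℤ) : WithZero (Multiplicative ℤ)) by rfl]
      at this
    exact le_coe_ofAdd_neg_iff.mp this
  have hcT : ∀ v : HeightOneSpectrum (𝓞 K),
      Valued.v ((ω v : v.adicCompletion K)) = 1 → c v = 0 := by
    intro v h1
    rw [hval v, show (1 : WithZero (Multiplicative ℤ)) =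
      ((Multiplicative.ofAdd (-(0:ℤ)) : Multiplicative ℤ) : WithZero (Multiplicative ℤ)) by rfl,
      WithZero.coe_inj] at h1
    have := congrArg Multiplicative.toAdd h1
    simpa using this
  set Tf := hTfin.toFinset with hTf
  set 𝔞 : Ideal (𝓞 K) := ∏ v ∈ Tf, v.asIdeal ^ (c v).toNat with h𝔞
  have h𝔞0 : 𝔞 ≠ 0 := Finset.prod_ne_zero_iff.mpr fun v _ => pow_ne_zero _ v.ne_bot
  have hcount : ∀ w : HeightOneSpectrum (𝓞 K),
      FractionalIdeal.count K w (𝔞 : FractionalIdeal (𝓞 K)⁰ K) = c w := by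
    intro w
    rw [h𝔞, show ((∏ v ∈ Tf, v.asIdeal ^ (c v).toNat : Ideal (𝓞 K)) :
        FractionalIdeal (𝓞 K)⁰ K) = ∏ v ∈ Tf,
          ((v.asIdeal ^ (c v).toNat : Ideal (𝓞 K)) : FractionalIdeal (𝓞 K)⁰ K) from
      map_prod (coeIdealHom (𝓞 K)⁰ K) _ _]
    rw [FractionalIdeal.count_prod _ _ _ _
      (fun v _ => by rw [coeIdeal_pow]; exact pow_ne_zero _ (coeIdeal_ne_zero.mpr v.ne_bot))]
    have : ∀ v ∈ Tf, FractionalIdeal.count K w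
        ((v.asIdeal ^ (c v).toNat : Ideal (𝓞 K)) : FractionalIdeal (𝓞 K)⁰ K) =
        if v = w then ((c v).toNat : ℤ) else 0 := by
      intro v _
      rw [coeIdeal_pow, FractionalIdeal.count_pow, FractionalIdeal.count_maximal]
      split_ifs <;> ring
    rw [Finset.sum_congr rfl this, Finset.sum_ite_eq' Tf w (fun v => ((c v).toNat : ℤ))]
    by_cases hw : w ∈ Tf
    · rw [if_pos hw, Int.toNat_of_nonneg (hc0 w)]
    · rw [if_neg hw]
      rw [hTf, Set.Finite.mem_toFinset, Set.mem_setOf_eq, not_not] at hw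
      exact (hcT w hw).symm
  have hfactorval : ∀ v : HeightOneSpectrum (𝓞 K),
      Valued.v ((ω v : v.adicCompletion K)) = idealFactorVal K v 𝔞 := by
    intro v
    rw [idealFactorVal, if_neg h𝔞0, hval v]
    congr 2
    rw [← hcount v, FractionalIdeal.count_coe K v h𝔞0]
  refine ⟨𝔞, h𝔞0, ?_, hfactorval⟩
  intro J hJ0 hequiv
  obtain ⟨x, hx0, hxP, hx⟩ := hequiv
  by_contra hlt
  push_neg at hlt
  have hnorm := absNorm_eq_of_span_mul hx
  have h𝔞pos : (0 : ℚ) < (Ideal.absNorm 𝔞 : ℚ) := by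
    exact_mod_cast Nat.pos_of_ne_zero (fun h => h𝔞0 (Ideal.absNorm_eq_zero_iff.mp h))
  have hxpos : (0 : ℚ) < |Algebra.norm ℚ x| :=
    abs_pos.mpr ((Algebra.norm_ne_zero_iff).mpr hx0)
  have hxlt1 : |Algebra.norm ℚ x| < 1 := by
    have hJA : (Ideal.absNorm J : ℚ) < (Ideal.absNorm 𝔞 : ℚ) := by exact_mod_cast hlt
    rw [hnorm] at hJA
    by_contra h1
    push_neg at h1
    nlinarith
  refine hb ⟨x⁻¹, inv_ne_zero hx0, hxP.inv', ?_, ?_⟩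
  · rw [norm_abs_inv hx0]
    exact (one_lt_inv₀ hxpos).mpr hxlt1
  · intro v
    rw [hval v, valuation_eq_count v (inv_ne_zero hx0)]
    rw [← spanSingleton_inv, FractionalIdeal.count_inv]
    have hsx : spanSingleton (𝓞 K)⁰ x ≠ 0 := by
      rw [ne_eq, spanSingleton_eq_zero_iff]; exact hx0
    have hcm : FractionalIdeal.count K v (J : FractionalIdeal (𝓞 K)⁰ K) =
        FractionalIdeal.count K v (spanSingleton (𝓞 K)⁰ x) +
          FractionalIdeal.count K v (𝔞 : FractionalIdeal (𝓞 K)⁰ K) := by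
      rw [hx, FractionalIdeal.count_mul K v hsx (coeIdeal_ne_zero.mpr h𝔞0)]
    rw [le_coe_ofAdd_neg_iff]
    have hJnn := FractionalIdeal.count_coe_nonneg K v J
    rw [hcount v] at hcm
    omega

lemma boundary_of_minnorm
    (ω : ∀ v : HeightOneSpectrum (𝓞 K), v.adicCompletionIntegers K)
    {𝔞 : Ideal (𝓞 K)} (h𝔞0 : 𝔞 ≠ 0) (hmin : MinNorm K 𝔞)
    (hval : ∀ v : HeightOneSpectrum (𝓞 K),
      Valued.v ((ω v : v.adicCompletion K)) = idealFactorVal K v 𝔞) :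
    IsBoundaryElt K ω := by
  rintro ⟨x, hx0, hxP, hxN, hxv⟩
  have hsx : spanSingleton (𝓞 K)⁰ x ≠ 0 := by
    rw [ne_eq, spanSingleton_eq_zero_iff]; exact hx0
  have h𝔞ne : (𝔞 : FractionalIdeal (𝓞 K)⁰ K) ≠ 0 := coeIdeal_ne_zero.mpr h𝔞0
  have hcle : ∀ v : HeightOneSpectrum (𝓞 K),
      FractionalIdeal.count K v (spanSingleton (𝓞 K)⁰ x) ≤
        FractionalIdeal.count K v (𝔞 : FractionalIdeal (𝓞 K)⁰ K) := by
    intro v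
    have := hxv v
    rw [hval v, idealFactorVal, if_neg h𝔞0, valuation_eq_count v hx0] at this
    rw [FractionalIdeal.count_coe K v h𝔞0]
    exact le_coe_ofAdd_neg_iff.mp this
  set I : FractionalIdeal (𝓞 K)⁰ K := spanSingleton (𝓞 K)⁰ x⁻¹ * (𝔞 : FractionalIdeal (𝓞 K)⁰ K)
    with hI
  have hsxi : spanSingleton (𝓞 K)⁰ x⁻¹ ≠ 0 := by
    rw [ne_eq, spanSingleton_eq_zero_iff]; exact inv_ne_zero hx0
  have hI0 : I ≠ 0 := mul_ne_zero hsxi h𝔞ne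
  have hIc : ∀ v : HeightOneSpectrum (𝓞 K), 0 ≤ FractionalIdeal.count K v I := by
    intro v
    rw [hI, FractionalIdeal.count_mul K v hsxi h𝔞ne, ← spanSingleton_inv,
      FractionalIdeal.count_inv]
    have := hcle v
    omega
  obtain ⟨J, hJ0, hJI⟩ := exists_ideal_of_count_nonneg hI0 hIc
  have hmin' := hmin J hJ0 ⟨x⁻¹, inv_ne_zero hx0, hxP.inv', by rw [hJI]⟩
  have hnorm := absNorm_eq_of_span_mul (hJI.trans hI.symm ▸ hJI : (J : FractionalIdeal (𝓞 K)⁰ K)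
    = spanSingleton (𝓞 K)⁰ x⁻¹ * (𝔞 : FractionalIdeal (𝓞 K)⁰ K))
  rw [norm_abs_inv hx0] at hnorm
  have h𝔞pos : (0 : ℚ) < (Ideal.absNorm 𝔞 : ℚ) := by
    exact_mod_cast Nat.pos_of_ne_zero (fun h => h𝔞0 (Ideal.absNorm_eq_zero_iff.mp h))
  have hinvlt : |Algebra.norm ℚ x|⁻¹ < 1 := by
    rw [inv_lt_one_iff₀]
    right; exact hxN
  have : (Ideal.absNorm J : ℚ) < (Ideal.absNorm 𝔞 : ℚ) := by
    rw [hnorm]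
    nlinarith
  have : Ideal.absNorm J < Ideal.absNorm 𝔞 := by exact_mod_cast this
  omega

end Helpers

/-- Assume the narrow class group of `K` is finite. An integral adele
`ω ∈ Ô` is a boundary element if and only if there is a nonzero integral ideal `𝔞` of
minimal norm in its narrow class with `v(ω_v) = v(𝔞)` for all finite places `v`. In
particular, every boundary element has all components nonzero, with `v(ω_v) = 0` for all
but finitely many `v`. -/
theorem boundary_elt_iff_minimal_ideal_valuations (K : Type*) [Field K] [NumberField K]
    (hfin : NarrowClassFinite K)
    (ω : ∀ v : HeightOneSpectrum (𝓞 K), v.adicCompletionIntegers K) :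
    (IsBoundaryElt K ω ↔ ∃ 𝔞 : Ideal (𝓞 K), 𝔞 ≠ 0 ∧ MinNorm K 𝔞 ∧
        ∀ v : HeightOneSpectrum (𝓞 K),
          Valued.v ((ω v : v.adicCompletion K)) = idealFactorVal K v 𝔞) ∧
      (IsBoundaryElt K ω →
        (∀ v : HeightOneSpectrum (𝓞 K), ((ω v : v.adicCompletion K)) ≠ 0) ∧
        {v : HeightOneSpectrum (𝓞 K) |
          Valued.v ((ω v : v.adicCompletion K)) ≠ 1}.Finite) := by
  refine ⟨⟨fun hb => boundary_exists_minnorm_ideal hfin ω hb, ?_⟩, fun hb =>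
    ⟨boundary_components_ne_zero hfin ω hb, boundary_support_finite hfin ω hb⟩⟩
  rintro ⟨𝔞, h0, hmin, hval⟩
  exact boundary_of_minnorm ω h0 hmin hval
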